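/- Let Γ ≤ GL_n(ℂ) be a finitely generated group. Then Γ ∩ U, where U is the group of upper unitriangular n×n matrices, is a separable subgroup of Γ. -/

import Mathlib

open Matrix

variable {n : ℕ}

lemma diag_mul_triangular {A B : Matrix (Fin n) (Fin n) ℂ}
    (hA : A.BlockTriangular id) (hB : B.BlockTriangular id) (i : Fin n) :
    (A * B) i i = A i i * B i i := by
  rw [Matrix.mul_apply]
  refine Finset.sum_eq_single i (fun k _ hk => ?_) (by simp)
  rcases lt_or_gt_of_ne hk with h | h
  · rw [hA (show (id k : Fin n) < id i from h), zero_mul]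
  · rw [hB (show (id i : Fin n) < id k from h), mul_zero]

/-- The Borel subgroup of invertible upper triangular matrices. -/
def BorelGL (n : ℕ) : Subgroup (GL (Fin n) ℂ) where
  carrier := {g | (g : Matrix (Fin n) (Fin n) ℂ).BlockTriangular id}
  one_mem' := by simpa using Matrix.blockTriangular_one
  mul_mem' := by
    intro a b ha hb
    simpa using Matrix.BlockTriangular.mul ha hb
  inv_mem' := by
    intro a ha
    have : Invertible ((a : Matrix (Fin n) (Fin n) ℂ)) := a.invertible
    simpa [Matrix.coe_units_inv] using Matrix.blockTriangular_inv_of_blockTriangular ha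

/-- The subgroup of upper unitriangular matrices. -/
def UnitriangularGL (n : ℕ) : Subgroup (GL (Fin n) ℂ) where
  carrier := {g | (g : Matrix (Fin n) (Fin n) ℂ).BlockTriangular id ∧
      ∀ i, (g : Matrix (Fin n) (Fin n) ℂ) i i = 1}
  one_mem' := ⟨by simpa using Matrix.blockTriangular_one, by simp⟩
  mul_mem' := by
    intro a b ha hb
    refine ⟨by simpa using Matrix.BlockTriangular.mul ha.1 hb.1, fun i => ?_⟩
    show ((a : Matrix (Fin n) (Fin n) ℂ) * b) i i = 1
    rw [diag_mul_triangular ha.1 hb.1, ha.2 i, hb.2 i, one_mul]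
  inv_mem' := by
    intro a ha
    have : Invertible ((a : Matrix (Fin n) (Fin n) ℂ)) := a.invertible
    have htri : ((a : Matrix (Fin n) (Fin n) ℂ))⁻¹.BlockTriangular id :=
      Matrix.blockTriangular_inv_of_blockTriangular ha.1
    have hinv : ((a⁻¹ : GL (Fin n) ℂ) : Matrix (Fin n) (Fin n) ℂ) =
        ((a : Matrix (Fin n) (Fin n) ℂ))⁻¹ := Matrix.coe_units_inv a
    refine ⟨by rw [hinv]; exact htri, fun i => ?_⟩
    have h1 : ((a : Matrix (Fin n) (Fin n) ℂ) * ((a : Matrix (Fin n) (Fin n) ℂ))⁻¹) i i = 1 := by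
      rw [Matrix.mul_nonsing_inv _ (Matrix.isUnit_det_of_invertible _)]
      simp
    rw [hinv]
    have := diag_mul_triangular ha.1 htri i
    rw [h1, ha.2 i, one_mul] at this
    exact this.symm

lemma diag_ne_zero {g : GL (Fin n) ℂ} (hg : g ∈ BorelGL n) (i : Fin n) :
    (g : Matrix (Fin n) (Fin n) ℂ) i i ≠ 0 := by
  have hdet : (g : Matrix (Fin n) (Fin n) ℂ).det ≠ 0 := by
    have : Invertible ((g : Matrix (Fin n) (Fin n) ℂ)) := g.invertible
    exact IsUnit.ne_zero (Matrix.isUnit_det_of_invertible _)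
  rw [Matrix.det_of_upperTriangular hg] at hdet
  exact fun h => hdet (Finset.prod_eq_zero (Finset.mem_univ i) h)

/-- The diagonal-entries homomorphism on the Borel subgroup. -/
noncomputable def diagHom (n : ℕ) : ↥(BorelGL n) →* (Fin n → ℂˣ) where
  toFun g := fun i => Units.mk0 (((g : GL (Fin n) ℂ) : Matrix (Fin n) (Fin n) ℂ) i i)
      (diag_ne_zero g.2 i)
  map_one' := by
    funext i
    exact Units.ext (by simp)
  map_mul' := by
    intro a b
    funext i
    refine Units.ext ?_
    exact diag_mul_triangular a.2 b.2 i

def SeparableSubgroup {Γ : Type*} [Group Γ] (H : Subgroup Γ) : Prop :=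
  ∀ g : Γ, g ∉ H → ∃ (F : Type) (_ : Group F) (_ : Finite F) (φ : Γ →* F),
    φ g ∉ φ '' (H : Set Γ)


instance : IsJacobsonRing ℤ := by
  rw [isJacobsonRing_iff_prime_eq]
  intro P hP
  rcases eq_or_ne P ⊥ with rfl | hbot
  · refine le_antisymm (fun x hx => ?_) Ideal.le_jacobson
    rw [Ideal.mem_bot]
    by_contra hx0
    obtain ⟨p, hple, hp⟩ := Nat.exists_infinite_primes (x.natAbs + 1)
    have hmax : (Ideal.span {(p : ℤ)}).IsMaximal :=
      PrincipalIdealRing.isMaximal_of_irreducible (Nat.prime_iff_prime_int.mp hp).irreducible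
    have hx' : x ∈ Ideal.span {(p : ℤ)} := by
      rw [Ideal.jacobson] at hx
      exact Submodule.mem_sInf.mp hx _ ⟨bot_le, hmax⟩
    rw [Ideal.mem_span_singleton] at hx'
    have h1 : (p : ℤ) ≤ |x| := Int.le_of_dvd (abs_pos.mpr hx0) (hx'.trans (self_dvd_abs x))
    rw [Int.abs_eq_natAbs] at h1
    exact absurd h1 (by push_cast; omega)
  · haveI := hP
    have hmax := IsPrime.to_maximal_ideal hbot
    exact le_antisymm (sInf_le ⟨le_rfl, hmax⟩) Ideal.le_jacobson

lemma finite_of_field_module_finite (K : Type*) [Field K] [Module.Finite ℤ K] : Finite K := by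
  have hint : Algebra.IsIntegral ℤ K := Algebra.IsIntegral.of_finite ℤ K
  by_cases hker : ∀ c : ℤ, algebraMap ℤ K c = 0 → c = 0
  · have hinj : Function.Injective (algebraMap ℤ K) :=
      (injective_iff_map_eq_zero (algebraMap ℤ K)).mpr hker
    exact absurd ((Algebra.IsIntegral.isField_iff_isField hinj).mpr (Field.toIsField K))
      Int.not_isField
  · push_neg at hker
    obtain ⟨c, hc, hc0⟩ := hker
    apply Module.finite_of_fg_torsion
    intro x
    refine ⟨⟨c, mem_nonZeroDivisors_of_ne_zero hc0⟩, ?_⟩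
    show c • x = 0
    rw [zsmul_eq_mul]
    have : ((c : ℤ) : K) = algebraMap ℤ K c := by simp [algebraMap_int_eq]
    rw [this, hc, zero_mul]

lemma exists_maximal_notMem (R : Type*) [CommRing R] [IsDomain R]
    [Algebra.FiniteType ℤ R] (a : R) (ha : a ≠ 0) :
    ∃ m : Ideal R, m.IsMaximal ∧ a ∉ m ∧ Finite (R ⧸ m) := by
  haveI : IsJacobsonRing R := isJacobsonRing_of_finiteType (A := ℤ)
  have hjac : (⊥ : Ideal R).jacobson = ⊥ :=
    isJacobsonRing_iff_prime_eq.mp inferInstance ⊥ Ideal.bot_prime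
  have hnot : a ∉ (⊥ : Ideal R).jacobson := by rw [hjac]; simpa using ha
  rw [Ideal.jacobson] at hnot
  have : ∃ m ∈ {J : Ideal R | ⊥ ≤ J ∧ J.IsMaximal}, a ∉ m := by
    by_contra h
    push_neg at h
    exact hnot (Submodule.mem_sInf.mpr h)
  obtain ⟨m, ⟨-, hmax⟩, ham⟩ := this
  refine ⟨m, hmax, ham, ?_⟩
  haveI := hmax
  letI : Field (R ⧸ m) := Ideal.Quotient.field m
  haveI : Algebra.FiniteType ℤ (R ⧸ m) :=
    Algebra.FiniteType.of_surjective (Ideal.Quotient.mkₐ ℤ m)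
      (Ideal.Quotient.mkₐ_surjective ℤ m)
  haveI : Module.Finite ℤ (R ⧸ m) := finite_of_finite_type_of_isJacobsonRing ℤ _
  exact finite_of_field_module_finite _


def entriesSubgroup (A : Subalgebra ℤ ℂ) (n : ℕ) : Subgroup (GL (Fin n) ℂ) where
  carrier := {g | (∀ i j, (g : Matrix (Fin n) (Fin n) ℂ) i j ∈ A) ∧
      (∀ i j, ((g⁻¹ : GL (Fin n) ℂ) : Matrix (Fin n) (Fin n) ℂ) i j ∈ A)}
  one_mem' := by
    constructor <;> intro i j <;>
    · simp only [inv_one, Units.val_one, Matrix.one_apply]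
      split <;> [exact A.one_mem; exact A.zero_mem]
  mul_mem' := by
    rintro a b ⟨ha1, ha2⟩ ⟨hb1, hb2⟩
    constructor <;> intro i j
    · rw [Units.val_mul, Matrix.mul_apply]
      exact A.toSubring.sum_mem fun k _ => A.mul_mem (ha1 i k) (hb1 k j)
    · rw [_root_.mul_inv_rev, Units.val_mul, Matrix.mul_apply]
      exact A.toSubring.sum_mem fun k _ => A.mul_mem (hb2 i k) (ha2 k j)
  inv_mem' := by
    rintro a ⟨h1, h2⟩
    exact ⟨h2, by simpa using h1⟩

def entriesMonoidHom (A : Subalgebra ℤ ℂ) (n : ℕ) :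
    ↥(entriesSubgroup A n) →* Matrix (Fin n) (Fin n) ↥A where
  toFun g := fun i j => ⟨((g : GL (Fin n) ℂ) : Matrix (Fin n) (Fin n) ℂ) i j, g.2.1 i j⟩
  map_one' := by
    ext i j
    simp only [Subgroup.coe_one, Units.val_one]
    rw [Matrix.one_apply]
    by_cases h : i = j <;> simp [h, Matrix.one_apply]
  map_mul' a b := by
    ext i j
    simp only [Subgroup.coe_mul, Units.val_mul, Matrix.mul_apply]
    push_cast
    erw [Matrix.mul_apply]
    push_cast
    rfl

set_option maxHeartbeats 1000000 in
set_option synthInstance.maxHeartbeats 1000000 in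
/-- For a finitely generated Γ ≤ GL_n(ℂ), the subgroup Γ ∩ U of unitriangular
elements of Γ is separable in Γ. -/
theorem inter_unitriangular_separable (n : ℕ)
    (Γ : Subgroup (GL (Fin n) ℂ)) (hfg : Group.FG ↥Γ) :
    SeparableSubgroup ((UnitriangularGL n).subgroupOf Γ) := by
  classical
  intro g hg
  obtain ⟨S, hS⟩ := hfg.out
  set E : Set ℂ := ⋃ γ ∈ (S : Set ↥Γ),
      (Set.range (fun p : Fin n × Fin n =>
          ((γ : GL (Fin n) ℂ) : Matrix (Fin n) (Fin n) ℂ) p.1 p.2) ∪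
       Set.range (fun p : Fin n × Fin n =>
          (((γ : GL (Fin n) ℂ)⁻¹ : GL (Fin n) ℂ) : Matrix (Fin n) (Fin n) ℂ) p.1 p.2)) with hE
  have hEfin : E.Finite := Set.Finite.biUnion S.finite_toSet
    (fun γ _ => (Set.finite_range _).union (Set.finite_range _))
  obtain ⟨A, hAfg, hmemA⟩ : ∃ A : Subalgebra ℤ ℂ, A.FG ∧ E ⊆ ↑A :=
    ⟨Algebra.adjoin ℤ E, Subalgebra.fg_def.mpr ⟨E, hEfin, rfl⟩, Algebra.subset_adjoin⟩
  have hgen : ∀ γ ∈ S, Γ.subtype γ ∈ entriesSubgroup A n := by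
    intro γ hγ
    refine ⟨fun i j => ?_, fun i j => ?_⟩
    · exact hmemA (Set.mem_biUnion hγ (Or.inl ⟨(i, j), rfl⟩))
    · exact hmemA (Set.mem_biUnion hγ (Or.inr ⟨(i, j), rfl⟩))
  have hle : Γ ≤ entriesSubgroup A n := by
    have h2 : Subgroup.closure (Γ.subtype '' (S : Set ↥Γ)) = Γ := by
      rw [← MonoidHom.map_closure, hS, ← MonoidHom.range_eq_map, Subgroup.subtype_range]
    rw [← h2]
    refine (Subgroup.closure_le _).mpr ?_
    rintro x ⟨γ, hγ, rfl⟩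
    exact hgen γ hγ
  rw [Subgroup.mem_subgroupOf] at hg
  have hg' : ¬((((g : GL (Fin n) ℂ)) : Matrix (Fin n) (Fin n) ℂ).BlockTriangular id ∧
      ∀ i, (((g : GL (Fin n) ℂ)) : Matrix (Fin n) (Fin n) ℂ) i i = 1) := hg
  rw [not_and_or] at hg'
  have key : ∃ (i j : Fin n) (c : ↥A),
      (⟨(((g : GL (Fin n) ℂ)) : Matrix (Fin n) (Fin n) ℂ) i j, (hle g.2).1 i j⟩ : ↥A) ≠ c ∧
      ∀ u : GL (Fin n) ℂ, u ∈ UnitriangularGL n →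
        (u : Matrix (Fin n) (Fin n) ℂ) i j = (c : ℂ) := by
    rcases hg' with h | h
    · rw [Matrix.BlockTriangular] at h
      push_neg at h
      obtain ⟨i, j, hij, hne⟩ := h
      exact ⟨i, j, 0, by simp [Subtype.ext_iff, hne], fun u hu => hu.1 hij⟩
    · push_neg at h
      obtain ⟨i, hne⟩ := h
      exact ⟨i, i, 1, by simp [Subtype.ext_iff, hne], fun u hu => hu.2 i⟩
  obtain ⟨i, j, c, hne, hc⟩ := key
  set a : ↥A := ⟨(((g : GL (Fin n) ℂ)) : Matrix (Fin n) (Fin n) ℂ) i j, (hle g.2).1 i j⟩ - c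
    with haa
  have ha : a ≠ 0 := sub_ne_zero.mpr hne
  haveI : Algebra.FiniteType ℤ ↥A := (Subalgebra.fg_iff_finiteType A).mp hAfg
  obtain ⟨m, hmax, ham, hfin⟩ := exists_maximal_notMem ↥A a ha
  haveI := hfin
  let ψ : ↥Γ →* Matrix (Fin n) (Fin n) (↥A ⧸ m) :=
    ((Ideal.Quotient.mk m).mapMatrix.toMonoidHom.comp
      ((entriesMonoidHom A n).comp (Subgroup.inclusion hle)))
  refine ⟨(Matrix (Fin n) (Fin n) (↥A ⧸ m))ˣ, inferInstance, inferInstance, ψ.toHomUnits, ?_⟩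
  rintro ⟨h, hh, hhg⟩
  have hmat : ψ h = ψ g := by
    have := congrArg Units.val hhg
    simpa using this
  have hψg : ψ g i j = Ideal.Quotient.mk m
      ⟨(((g : GL (Fin n) ℂ)) : Matrix (Fin n) (Fin n) ℂ) i j, (hle g.2).1 i j⟩ := rfl
  have hψh : ψ h i j = Ideal.Quotient.mk m
      ⟨(((h : GL (Fin n) ℂ)) : Matrix (Fin n) (Fin n) ℂ) i j, (hle h.2).1 i j⟩ := rfl
  have hh' : (h : GL (Fin n) ℂ) ∈ UnitriangularGL n := (Subgroup.mem_subgroupOf).mp hh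
  have hval : (⟨(((h : GL (Fin n) ℂ)) : Matrix (Fin n) (Fin n) ℂ) i j, (hle h.2).1 i j⟩ : ↥A)
      = c := Subtype.ext (hc _ hh')
  have e0 : ψ h i j = ψ g i j := congrFun (congrFun hmat i) j
  have e1 : Ideal.Quotient.mk m c = Ideal.Quotient.mk m
      ⟨(((g : GL (Fin n) ℂ)) : Matrix (Fin n) (Fin n) ℂ) i j, (hle g.2).1 i j⟩ := by
    rw [← hψg, ← e0, hψh, hval]
  have hmem : a ∈ m := by
    rw [haa]
    exact (Ideal.Quotient.mk_eq_mk_iff_sub_mem _ _).mp e1.symm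
  exact ham hmem
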